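/- For 0 < a < b, the integral of ln(x)/(x·sqrt((b-x)(x-a))) over [a,b] equals (2π/√(ab))·ln(2√(ab)/(√a+√b)). -/

import Mathlib

open Real MeasureTheory intervalIntegral Set


noncomputable def F (k : ℝ) : ℝ := ∫ θ in (0:ℝ)..π, Real.log (1 - 2*k*Real.cos θ + k^2)

lemma quad_pos {k : ℝ} (hk : |k| < 1) (θ : ℝ) : 0 < 1 - 2*k*Real.cos θ + k^2 := by
  have h1 : |Real.cos θ| ≤ 1 := Real.abs_cos_le_one θ
  have h2 : k * Real.cos θ ≤ |k| * 1 := by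
    calc k * Real.cos θ ≤ |k * Real.cos θ| := le_abs_self _
    _ = |k| * |Real.cos θ| := abs_mul _ _
    _ ≤ |k| * 1 := by gcongr
  nlinarith [sq_abs k, abs_nonneg k]

lemma cont_quad (k : ℝ) : Continuous fun θ : ℝ => 1 - 2*k*Real.cos θ + k^2 := by
  continuity

lemma cont_log_quad {k : ℝ} (hk : |k| < 1) :
    Continuous fun θ : ℝ => Real.log (1 - 2*k*Real.cos θ + k^2) := by
  apply (cont_quad k).log
  intro θ; exact (quad_pos hk θ).ne'

lemma F_neg (k : ℝ) : F (-k) = F k := by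
  unfold F
  have := intervalIntegral.integral_comp_sub_left
    (fun θ => Real.log (1 - 2*k*Real.cos θ + k^2)) π (a := 0) (b := π)
  simp only [sub_zero, sub_self] at this
  rw [← this]
  congr 1; ext θ
  rw [Real.cos_pi_sub]; ring_nf

lemma F_double {k : ℝ} (hk : |k| < 1) : F (k^2) = 2 * F k := by
  have hk2 : |k^2| < 1 := by
    have : |k|^2 < 1 := by nlinarith [abs_nonneg k]
    rwa [← abs_pow] at this
  have hi1 : IntervalIntegrable (fun θ => Real.log (1 - 2*k*Real.cos θ + k^2)) volume 0 π :=
    (cont_log_quad hk).intervalIntegrable _ _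
  have hi2 : IntervalIntegrable (fun θ => Real.log (1 + 2*k*Real.cos θ + k^2)) volume 0 π := by
    have := (cont_log_quad (k := -k) (by rwa [abs_neg])).intervalIntegrable (μ := volume) 0 π
    simpa [neg_mul, sub_neg_eq_add] using this
  -- 2 F k = F k + F (-k) = ∫ sum of logs = ∫ log product
  have e1 : F k + F (-k) = ∫ θ in (0:ℝ)..π, Real.log (1 - 2*(k^2)*Real.cos (2*θ) + (k^2)^2) := by
    unfold F
    rw [← intervalIntegral.integral_add hi1 (by simpa [neg_mul, sub_neg_eq_add] using hi2)]
    congr 1; ext θ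
    rw [← Real.log_mul (quad_pos hk θ).ne' (by simpa [neg_mul, sub_neg_eq_add] using (quad_pos (k := -k) (by rwa [abs_neg]) θ).ne')]
    congr 1
    have := Real.cos_sq θ
    have h2 : Real.cos (2*θ) = 2 * Real.cos θ ^ 2 - 1 := Real.cos_two_mul θ
    nlinarith [Real.sin_sq_add_cos_sq θ]
  have e2 : (∫ θ in (0:ℝ)..π, Real.log (1 - 2*(k^2)*Real.cos (2*θ) + (k^2)^2)) = 2⁻¹ * ∫ φ in (0:ℝ)..(2*π), Real.log (1 - 2*(k^2)*Real.cos φ + (k^2)^2) := by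
    have := intervalIntegral.integral_comp_mul_left
      (fun φ => Real.log (1 - 2*(k^2)*Real.cos φ + (k^2)^2)) (a := 0) (b := π) (c := 2) two_ne_zero
    simpa [smul_eq_mul] using this
  have e3 : (∫ φ in (0:ℝ)..(2*π), Real.log (1 - 2*(k^2)*Real.cos φ + (k^2)^2)) = 2 * F (k^2) := by
    have hsplit : (∫ φ in (0:ℝ)..(2*π), Real.log (1 - 2*(k^2)*Real.cos φ + (k^2)^2))
        = (∫ φ in (0:ℝ)..π, Real.log (1 - 2*(k^2)*Real.cos φ + (k^2)^2))
          + ∫ φ in π..(2*π), Real.log (1 - 2*(k^2)*Real.cos φ + (k^2)^2) := by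
      rw [intervalIntegral.integral_add_adjacent_intervals]
      · exact (cont_log_quad hk2).intervalIntegrable _ _
      · exact (cont_log_quad hk2).intervalIntegrable _ _
    rw [hsplit]
    have e4 : (∫ φ in π..(2*π), Real.log (1 - 2*(k^2)*Real.cos φ + (k^2)^2)) = F (-(k^2)) := by
      have := intervalIntegral.integral_comp_add_right
        (fun φ => Real.log (1 - 2*(k^2)*Real.cos φ + (k^2)^2)) π (a := 0) (b := π)
      rw [zero_add, ← two_mul] at this
      rw [← this]
      unfold F
      congr 1; ext θ
      rw [Real.cos_add_pi]; ring_nf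
    rw [e4, F_neg]
    unfold F; ring
  have := F_neg k
  unfold F at *
  linarith [e1, e2, e3, this]


lemma F_bound {k : ℝ} (hk : |k| ≤ 1/2) : |F k| ≤ π * Real.log 4 := by
  have hk1 : |k| < 1 := lt_of_le_of_lt hk (by norm_num)
  have key : ∀ θ ∈ Set.uIoc (0:ℝ) π, ‖Real.log (1 - 2*k*Real.cos θ + k^2)‖ ≤ Real.log 4 := by
    intro θ _
    set x := 1 - 2*k*Real.cos θ + k^2 with hx
    have hxpos : 0 < x := quad_pos hk1 θ
    have hcos : |Real.cos θ| ≤ 1 := Real.abs_cos_le_one θ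
    have hb : k * Real.cos θ ≤ |k| ∧ -(|k|) ≤ k * Real.cos θ := by
      constructor
      · calc k * Real.cos θ ≤ |k * Real.cos θ| := le_abs_self _
          _ = |k| * |Real.cos θ| := abs_mul _ _
          _ ≤ |k| := by nlinarith [abs_nonneg k]
      · have : -(k * Real.cos θ) ≤ |k| := by
          calc -(k * Real.cos θ) ≤ |k * Real.cos θ| := neg_le_abs _
            _ = |k| * |Real.cos θ| := abs_mul _ _
            _ ≤ |k| := by nlinarith [abs_nonneg k]
        linarith
    have hxu : x ≤ 4 := by have := sq_abs k; nlinarith [abs_nonneg k]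
    have hxl : 1/4 ≤ x := by have := sq_abs k; nlinarith [abs_nonneg k, sq_nonneg (|k| - 1/2)]
    rw [Real.norm_eq_abs, abs_le]
    constructor
    · have : Real.log (1/4) ≤ Real.log x := Real.log_le_log (by norm_num) hxl
      rw [show (1/4 : ℝ) = 4⁻¹ by norm_num, Real.log_inv] at this
      linarith
    · exact Real.log_le_log hxpos hxu
  have := intervalIntegral.norm_integral_le_of_norm_le_const (C := Real.log 4) key
  rw [Real.norm_eq_abs] at this
  calc |F k| ≤ Real.log 4 * |π - 0| := this
    _ = π * Real.log 4 := by rw [sub_zero, abs_of_pos Real.pi_pos]; ring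

lemma F_iter {k : ℝ} (hk : |k| < 1) (n : ℕ) : F k = F (k^(2^n)) / 2^n := by
  induction n with
  | zero => simp
  | succ n ih =>
    have habs : |k^(2^n)| < 1 := by
      rw [abs_pow]
      exact pow_lt_one₀ (abs_nonneg k) hk (by positivity)
    have := F_double habs
    rw [← pow_mul, show 2^n * 2 = 2^(n+1) by ring] at this
    rw [ih, this]
    rw [pow_succ]; ring

lemma F_zero {k : ℝ} (hk : |k| < 1) : F k = 0 := by
  by_cases hk0 : k = 0
  · unfold F; simp [hk0]
  have habs : |k| < 1 := hk
  have h0 : 0 < |k| := abs_pos.mpr hk0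
  -- |k|^(2^n) → 0
  have htend : Filter.Tendsto (fun n : ℕ => |k|^(2^n)) Filter.atTop (nhds 0) := by
    have h1 : Filter.Tendsto (fun n : ℕ => |k|^n) Filter.atTop (nhds 0) :=
      tendsto_pow_atTop_nhds_zero_of_lt_one (abs_nonneg k) habs
    have h2 : Filter.Tendsto (fun n : ℕ => 2^n) Filter.atTop Filter.atTop :=
      tendsto_pow_atTop_atTop_of_one_lt one_lt_two
    exact h1.comp h2
  obtain ⟨N, hN⟩ : ∃ N, |k|^(2^N) ≤ 1/2 := by
    have := htend.eventually_le_const (show (0:ℝ) < 1/2 by norm_num)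
    exact this.exists
  have hbd : ∀ᶠ n in Filter.atTop, |F k| ≤ π * Real.log 4 / 2^n := by
    filter_upwards [Filter.eventually_ge_atTop N] with n hn
    have hle : |k|^(2^n) ≤ 1/2 :=
      le_trans (pow_le_pow_of_le_one (abs_nonneg k) habs.le
        (Nat.pow_le_pow_right (by norm_num) hn)) hN
    have hF := F_bound (k := k^(2^n)) (by rwa [abs_pow])
    rw [F_iter habs n, abs_div, abs_of_pos (show (0:ℝ) < (2:ℝ)^n by positivity)]
    gcongr
  have hlim : Filter.Tendsto (fun n : ℕ => π * Real.log 4 / 2^n) Filter.atTop (nhds 0) :=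
    Filter.Tendsto.div_atTop tendsto_const_nhds (tendsto_pow_atTop_atTop_of_one_lt one_lt_two)
  have : |F k| ≤ 0 := ge_of_tendsto hlim hbd
  have := abs_nonneg (F k)
  have : |F k| = 0 := le_antisymm ‹|F k| ≤ 0› ‹0 ≤ |F k|›
  exact abs_eq_zero.mp this


lemma intK {p q : ℝ} (hq : |q| < p) :
    (∫ θ in (0:ℝ)..π, Real.log (p + q * Real.cos θ))
      = π * Real.log ((p + Real.sqrt (p^2 - q^2)) / 2) := by
  have hp : 0 < p := lt_of_le_of_lt (abs_nonneg q) hq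
  have hq2 : q^2 < p^2 := by nlinarith [sq_abs q, abs_nonneg q]
  set σ := Real.sqrt (p^2 - q^2) with hσ
  have hσ0 : 0 ≤ σ := Real.sqrt_nonneg _
  have hσsq : σ^2 = p^2 - q^2 := Real.sq_sqrt (by linarith)
  set s := (p + σ) / 2 with hs
  have hspos : 0 < s := by positivity
  set k := -q / (2*s) with hk
  have hkabs : |k| < 1 := by
    rw [hk, abs_div, abs_neg, abs_of_pos (by linarith : (0:ℝ) < 2*s)]
    rw [div_lt_one (by linarith)]
    have : |q| < p + σ := by linarith
    linarith [this]
  have hquad : 4*s^2 - 4*p*s + q^2 = 0 := by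
    rw [hs]; nlinarith [hσsq]
  have hfact : ∀ θ, p + q * Real.cos θ = s * (1 - 2*k*Real.cos θ + k^2) := by
    intro θ
    rw [hk]
    field_simp
    nlinarith [hquad]
  have hpt : ∀ θ, Real.log (p + q * Real.cos θ)
      = Real.log s + Real.log (1 - 2*k*Real.cos θ + k^2) := by
    intro θ
    rw [hfact θ, Real.log_mul hspos.ne' (quad_pos hkabs θ).ne']
  simp_rw [hpt]
  rw [intervalIntegral.integral_add (intervalIntegrable_const)
    ((cont_log_quad hkabs).intervalIntegrable _ _)]
  have : (∫ θ in (0:ℝ)..π, Real.log (1 - 2*k*Real.cos θ + k^2)) = 0 := F_zero hkabs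
  rw [this, intervalIntegral.integral_const, smul_eq_mul, sub_zero, add_zero, mul_comm]



section subst
variable {a b : ℝ} (ha : 0 < a) (hab : a < b)

-- f θ = (a+b)/2 - (b-a)/2 * cos θ
noncomputable def tf (a b : ℝ) (θ : ℝ) : ℝ := (a+b)/2 - (b-a)/2 * Real.cos θ

lemma tf_deriv (θ : ℝ) : HasDerivAt (tf a b) ((b-a)/2 * Real.sin θ) θ := by
  have h := ((Real.hasDerivAt_cos θ).const_mul ((b-a)/2)).const_sub ((a+b)/2)
  show HasDerivAt (fun x => (a+b)/2 - (b-a)/2 * Real.cos x) _ θ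
  exact h.congr_deriv (by ring)

include hab in
lemma tf_strictMono : StrictMonoOn (tf a b) (Set.Icc 0 π) := by
  intro x hx y hy hxy
  have := Real.strictAntiOn_cos hx hy hxy
  unfold tf
  have hr : 0 < (b-a)/2 := by linarith
  nlinarith

include ha hab in
lemma tf_image : tf a b '' Set.Ioo 0 π = Set.Ioo a b := by
  have hr : 0 < (b-a)/2 := by linarith
  have hf0 : tf a b 0 = a := by unfold tf; simp; ring
  have hfπ : tf a b π = b := by unfold tf; simp; ring
  apply Set.Subset.antisymm
  · rintro _ ⟨θ, hθ, rfl⟩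
    have h1 : Real.cos θ < 1 := by
      have := Real.strictAntiOn_cos (Set.left_mem_Icc.mpr Real.pi_pos.le)
        ⟨hθ.1.le, hθ.2.le⟩ hθ.1
      simpa using this
    have h2 : -1 < Real.cos θ := by
      have := Real.strictAntiOn_cos ⟨hθ.1.le, hθ.2.le⟩
        (Set.right_mem_Icc.mpr Real.pi_pos.le) hθ.2
      simpa using this
    constructor
    · unfold tf; nlinarith
    · unfold tf; nlinarith
  · intro y hy
    have hcont : ContinuousOn (tf a b) (Set.Icc 0 π) := by
      unfold tf; fun_prop
    have := intermediate_value_Icc Real.pi_pos.le hcont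
    rw [hf0, hfπ] at this
    obtain ⟨θ, hθ, hfθ⟩ := this ⟨hy.1.le, hy.2.le⟩
    refine ⟨θ, ⟨?_, ?_⟩, hfθ⟩
    · rcases eq_or_lt_of_le hθ.1 with h | h
      · exfalso; rw [← h, hf0] at hfθ; exact absurd hfθ.symm (ne_of_lt hy.1).symm
      · exact h
    · rcases eq_or_lt_of_le hθ.2 with h | h
      · exfalso; rw [h, hfπ] at hfθ; exact absurd hfθ (ne_of_gt hy.2)
      · exact h

include ha hab in
lemma subst_trig (g : ℝ → ℝ) :
    (∫ x in Set.Ioo a b, g x)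
      = ∫ θ in Set.Ioo 0 π, ((b-a)/2 * Real.sin θ) * g (tf a b θ) := by
  have h := MeasureTheory.integral_image_eq_integral_abs_deriv_smul
    (measurableSet_Ioo : MeasurableSet (Set.Ioo (0:ℝ) π))
    (fun θ _ => (tf_deriv (a := a) (b := b) θ).hasDerivWithinAt)
    ((tf_strictMono hab).injOn.mono Set.Ioo_subset_Icc_self) g
  rw [tf_image ha hab] at h
  rw [h]
  apply MeasureTheory.setIntegral_congr_fun measurableSet_Ioo
  intro θ hθ
  have hs : 0 < Real.sin θ := Real.sin_pos_of_pos_of_lt_pi hθ.1 hθ.2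
  have hr : 0 < (b-a)/2 := by linarith
  simp only [smul_eq_mul]
  rw [abs_of_pos (by positivity)]

include ha hab in
lemma subst_trig_integrable (g : ℝ → ℝ) :
    MeasureTheory.IntegrableOn g (Set.Ioo a b) ↔
      MeasureTheory.IntegrableOn
        (fun θ => |(b-a)/2 * Real.sin θ| • g (tf a b θ)) (Set.Ioo 0 π) := by
  have h := MeasureTheory.integrableOn_image_iff_integrableOn_abs_deriv_smul
    (measurableSet_Ioo : MeasurableSet (Set.Ioo (0:ℝ) π))
    (fun θ _ => (tf_deriv (a := a) (b := b) θ).hasDerivWithinAt)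
    ((tf_strictMono hab).injOn.mono Set.Ioo_subset_Icc_self) g
  rw [tf_image ha hab] at h
  exact h

include ha hab in
lemma sqrt_prod_eq (θ : ℝ) (hθ : θ ∈ Set.Ioo 0 π) :
    Real.sqrt ((b - tf a b θ) * (tf a b θ - a)) = (b-a)/2 * Real.sin θ := by
  have hs : 0 < Real.sin θ := Real.sin_pos_of_pos_of_lt_pi hθ.1 hθ.2
  have hr : 0 < (b-a)/2 := by linarith
  have hprod : (b - tf a b θ) * (tf a b θ - a) = ((b-a)/2 * Real.sin θ)^2 := by
    unfold tf
    linear_combination (-((b-a)/2)^2) * (Real.sin_sq_add_cos_sq θ)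
  rw [hprod, Real.sqrt_sq (by positivity)]

end subst



section main
variable {a b : ℝ} (ha : 0 < a) (hab : a < b)

include ha hab in
lemma tf_pos (θ : ℝ) : 0 < tf a b θ := by
  unfold tf
  have h1 : Real.cos θ ≤ 1 := Real.cos_le_one θ
  nlinarith

include ha hab in
lemma J2_aux :
    (∫ θ in Set.Ioo (0:ℝ) π, Real.log (tf a b θ))
      = 2 * π * Real.log ((Real.sqrt a + Real.sqrt b) / 2) := by
  rw [← MeasureTheory.integral_Ioc_eq_integral_Ioo,
    ← intervalIntegral.integral_of_le Real.pi_pos.le]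
  have hq : |-(b-a)/2| < (a+b)/2 := by
    rw [abs_of_nonpos (by linarith)]; linarith
  have key := intK (p := (a+b)/2) (q := -(b-a)/2) hq
  have heq : ∀ θ, tf a b θ = (a+b)/2 + (-(b-a)/2) * Real.cos θ := by
    intro θ; unfold tf; ring
  simp_rw [heq]
  rw [key]
  have hsq : ((a+b)/2)^2 - (-(b-a)/2)^2 = a*b := by ring
  rw [hsq]
  have hab' : Real.sqrt (a*b) = Real.sqrt a * Real.sqrt b :=
    Real.sqrt_mul ha.le b
  have hkey : ((a+b)/2 + Real.sqrt (a*b)) / 2 = ((Real.sqrt a + Real.sqrt b)/2)^2 := by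
    rw [hab']
    have h1 : Real.sqrt a ^ 2 = a := Real.sq_sqrt ha.le
    have h2 : Real.sqrt b ^ 2 = b := Real.sq_sqrt (by linarith : (0:ℝ) ≤ b)
    nlinarith
  rw [hkey, Real.log_pow]
  push_cast
  ring

include ha hab in
lemma J1 : (∫ x in Set.Ioo a b, 1 / Real.sqrt ((b - x) * (x - a))) = π := by
  rw [subst_trig ha hab]
  have : ∀ θ ∈ Set.Ioo (0:ℝ) π,
      ((b-a)/2 * Real.sin θ) * (1 / Real.sqrt ((b - tf a b θ) * (tf a b θ - a))) = 1 := by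
    intro θ hθ
    rw [sqrt_prod_eq ha hab θ hθ]
    have hs : 0 < Real.sin θ := Real.sin_pos_of_pos_of_lt_pi hθ.1 hθ.2
    have hr : 0 < (b-a)/2 := by linarith
    field_simp
    exact div_self (sub_pos.mpr hab).ne'
  rw [MeasureTheory.setIntegral_congr_fun measurableSet_Ioo this]
  simp [Real.pi_pos.le]

include ha hab in
lemma J2 : (∫ x in Set.Ioo a b, Real.log x / Real.sqrt ((b - x) * (x - a)))
    = 2 * π * Real.log ((Real.sqrt a + Real.sqrt b) / 2) := by
  rw [subst_trig ha hab]
  rw [← J2_aux ha hab]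
  apply MeasureTheory.setIntegral_congr_fun measurableSet_Ioo
  intro θ hθ
  beta_reduce
  rw [sqrt_prod_eq ha hab θ hθ]
  have hs : 0 < Real.sin θ := Real.sin_pos_of_pos_of_lt_pi hθ.1 hθ.2
  have hr : 0 < (b-a)/2 := by linarith
  field_simp
  rw [div_eq_iff (sub_pos.mpr hab).ne']
  ring

include ha hab in
lemma J1_int : MeasureTheory.IntegrableOn
    (fun x => 1 / Real.sqrt ((b - x) * (x - a))) (Set.Ioo a b) := by
  rw [subst_trig_integrable ha hab]
  apply MeasureTheory.IntegrableOn.congr_fun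
    (f := fun _ : ℝ => (1:ℝ))
  · exact (MeasureTheory.integrableOn_const measure_Ioo_lt_top.ne)
  · intro θ hθ
    beta_reduce
    rw [sqrt_prod_eq ha hab θ hθ]
    have hs : 0 < Real.sin θ := Real.sin_pos_of_pos_of_lt_pi hθ.1 hθ.2
    have hr : 0 < (b-a)/2 := by linarith
    rw [smul_eq_mul, abs_of_pos (by positivity)]
    field_simp
    exact (div_self (sub_pos.mpr hab).ne').symm
  · exact measurableSet_Ioo

include ha hab in
lemma J2_int : MeasureTheory.IntegrableOn
    (fun x => Real.log x / Real.sqrt ((b - x) * (x - a))) (Set.Ioo a b) := by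
  rw [subst_trig_integrable ha hab]
  apply MeasureTheory.IntegrableOn.congr_fun
    (f := fun θ : ℝ => Real.log (tf a b θ))
  · have hcont : Continuous fun θ : ℝ => Real.log (tf a b θ) := by
      apply Continuous.log
      · unfold tf; continuity
      · intro θ; exact (tf_pos ha hab θ).ne'
    exact (hcont.continuousOn.integrableOn_Icc).mono_set Set.Ioo_subset_Icc_self
  · intro θ hθ
    beta_reduce
    rw [sqrt_prod_eq ha hab θ hθ]
    have hs : 0 < Real.sin θ := Real.sin_pos_of_pos_of_lt_pi hθ.1 hθ.2
    have hr : 0 < (b-a)/2 := by linarith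
    rw [smul_eq_mul, abs_of_pos (by positivity)]
    field_simp
    rw [eq_div_iff (sub_pos.mpr hab).ne']
  · exact measurableSet_Ioo

end main


section main
variable {a b : ℝ} (ha : 0 < a) (hab : a < b)


include ha hab in
lemma inv_image : (fun x => a*b/x) '' Set.Ioo a b = Set.Ioo a b := by
  have hb : 0 < b := lt_trans ha hab
  have hmem : ∀ x ∈ Set.Ioo a b, a*b/x ∈ Set.Ioo a b := by
    intro x hx
    have hx0 : 0 < x := lt_trans ha hx.1
    constructor
    · rw [lt_div_iff₀ hx0]; nlinarith [hx.2]
    · rw [div_lt_iff₀ hx0]; nlinarith [hx.1]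
  apply Set.Subset.antisymm
  · rintro _ ⟨x, hx, rfl⟩; exact hmem x hx
  · intro y hy
    have hy0 : 0 < y := lt_trans ha hy.1
    refine ⟨a*b/y, hmem y hy, ?_⟩
    have h0 : a*b/y ≠ 0 := by positivity
    field_simp

include ha hab in
lemma inv_injOn : Set.InjOn (fun x => a*b/x) (Set.Ioo a b) := by
  intro x hx y hy h
  have hx0 : (0:ℝ) < x := lt_trans ha hx.1
  have hy0 : (0:ℝ) < y := lt_trans ha hy.1
  have hab0 : (0:ℝ) < a*b := mul_pos ha (lt_trans ha hab)
  simp only at h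
  rw [div_eq_div_iff hx0.ne' hy0.ne'] at h
  exact (mul_left_cancel₀ hab0.ne' h).symm
  
include ha hab in
lemma sqrt_inv_eq (x : ℝ) (hx : x ∈ Set.Ioo a b) :
    Real.sqrt ((b - a*b/x) * (a*b/x - a))
      = Real.sqrt (a*b) * Real.sqrt ((b - x) * (x - a)) / x := by
  have hx0 : (0:ℝ) < x := lt_trans ha hx.1
  have hb : (0:ℝ) < b := lt_trans ha hab
  have hP : (0:ℝ) ≤ (b - x) * (x - a) := by nlinarith [hx.1, hx.2]
  have key : (b - a*b/x) * (a*b/x - a)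
      = (Real.sqrt (a*b) * Real.sqrt ((b - x) * (x - a)) / x)^2 := by
    rw [div_pow, mul_pow, Real.sq_sqrt (by positivity : (0:ℝ) ≤ a*b), Real.sq_sqrt hP]
    field_simp
  rw [key, Real.sqrt_sq (by positivity)]

end main

theorem integral_log_div_x_sqrt (a b : ℝ) (ha : 0 < a) (hab : a < b) :
    ∫ x in a..b, Real.log x / (x * Real.sqrt ((b - x) * (x - a)))
      = (2 * Real.pi / Real.sqrt (a * b)) *
          Real.log (2 * Real.sqrt (a * b) / (Real.sqrt a + Real.sqrt b)) := by
  have hb : 0 < b := lt_trans ha hab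
  have hab0 : 0 < a * b := mul_pos ha hb
  have hs : 0 < Real.sqrt (a*b) := Real.sqrt_pos.mpr hab0
  have hsa : 0 < Real.sqrt a := Real.sqrt_pos.mpr ha
  have hsb : 0 < Real.sqrt b := Real.sqrt_pos.mpr hb
  have ht : 0 < Real.sqrt a + Real.sqrt b := by linarith
  rw [intervalIntegral.integral_of_le hab.le, MeasureTheory.integral_Ioc_eq_integral_Ioo]
  -- change of variables x ↦ a*b/x
  have hderiv : ∀ x ∈ Set.Ioo a b,
      HasDerivWithinAt (fun x => a*b/x) (-(a*b)/x^2) (Set.Ioo a b) x := by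
    intro x hx
    have hx0 : (0:ℝ) < x := lt_trans ha hx.1
    have h := (hasDerivAt_inv hx0.ne').const_mul (a*b)
    have : HasDerivAt (fun x => a*b/x) (-(a*b)/x^2) x := by
      simp only [div_eq_mul_inv]
      exact h.congr_deriv (by ring)
    exact this.hasDerivWithinAt
  have hcov := MeasureTheory.integral_image_eq_integral_abs_deriv_smul
    (measurableSet_Ioo : MeasurableSet (Set.Ioo a b)) hderiv (inv_injOn ha hab)
    (fun x => Real.log x / (x * Real.sqrt ((b - x) * (x - a))))
  rw [inv_image ha hab] at hcov
  rw [hcov]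
  have hcongr : ∀ x ∈ Set.Ioo a b,
      |(-(a*b)/x^2)| • (Real.log (a*b/x) / ((a*b/x) * Real.sqrt ((b - a*b/x) * (a*b/x - a))))
        = (Real.sqrt (a*b))⁻¹ * (Real.log (a*b) * (1 / Real.sqrt ((b - x) * (x - a)))
            - Real.log x / Real.sqrt ((b - x) * (x - a))) := by
    intro x hx
    have hx0 : (0:ℝ) < x := lt_trans ha hx.1
    have hP : (0:ℝ) < (b - x) * (x - a) := mul_pos (by linarith [hx.2]) (by linarith [hx.1])
    have hsP : 0 < Real.sqrt ((b - x) * (x - a)) := Real.sqrt_pos.mpr hP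
    rw [sqrt_inv_eq ha hab x hx, smul_eq_mul,
      abs_of_neg (div_neg_of_neg_of_pos (neg_lt_zero.mpr hab0) (by positivity)), Real.log_div hab0.ne' hx0.ne']
    field_simp
  rw [MeasureTheory.setIntegral_congr_fun measurableSet_Ioo hcongr]
  rw [MeasureTheory.integral_const_mul]
  rw [MeasureTheory.integral_sub ((J1_int ha hab).const_mul (Real.log (a*b))) (J2_int ha hab)]
  rw [MeasureTheory.integral_const_mul, J1 ha hab, J2 ha hab]
  -- final algebra
  have h1 : Real.log (a*b) = 2 * Real.log (Real.sqrt (a*b)) := by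
    rw [Real.log_sqrt hab0.le]; ring
  have h2 : Real.log (2 * Real.sqrt (a*b) / (Real.sqrt a + Real.sqrt b))
      = Real.log 2 + Real.log (Real.sqrt (a*b)) - Real.log (Real.sqrt a + Real.sqrt b) := by
    rw [Real.log_div (by positivity) ht.ne', Real.log_mul two_ne_zero hs.ne']
  have h3 : Real.log ((Real.sqrt a + Real.sqrt b) / 2)
      = Real.log (Real.sqrt a + Real.sqrt b) - Real.log 2 :=
    Real.log_div ht.ne' two_ne_zero
  rw [h1, h2, h3]
  field_simp
  ring
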